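/- Let k ≥ 1 be an integer, θ ∈ (0,1), let Ω and M be finite nonempty sets, and let L ⊆ [k]. For each i ∈ L let ν^(i) be a probability distribution on Ω^M whose coordinate marginals ν^(i)_c (for c ∈ M) satisfy ∑_{c∈M} KL(ν^(i)_c ‖ 𝒰_Ω) ≤ θ²·|M|. Let (c_i)_{i∈[k]} be independent random variables, each uniform on M. Then Pr( |{ i ∈ L : KL(ν^(i)_{c_i} ‖ 𝒰_Ω) > θ }| ≥ k/4 ) ≤ 2^k·θ^{k/4}. -/
import Mathlib


open scoped Classical
open Finset

/-- KL-divergence (base-2 logarithms) between two distributions on a finite set. -/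
noncomputable def KL {Ω : Type*} [Fintype Ω] (μ ν : Ω → ℝ) : ℝ :=
  ∑ x, if 0 < μ x then μ x * Real.logb 2 (μ x / ν x) else 0

/-- The uniform distribution on a finite set. -/
noncomputable def unif (Ω : Type*) [Fintype Ω] : Ω → ℝ := fun _ => 1 / (Fintype.card Ω : ℝ)

/-- The marginal distribution on `Ω` of the `c`-th coordinate of a distribution on `Ω^M`. -/
noncomputable def marg {Ω M : Type*} [Fintype Ω] [Fintype M]
    (ν : (M → Ω) → ℝ) (c : M) : Ω → ℝ :=
  fun x => ∑ f : M → Ω, if f c = x then ν f else 0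

lemma KL_unif_nonneg {Ω : Type*} [Fintype Ω] [Nonempty Ω] (μ : Ω → ℝ)
    (h0 : ∀ x, 0 ≤ μ x) (h1 : ∑ x, μ x = 1) : 0 ≤ KL μ (unif Ω) := by
  have hcard : (0:ℝ) < (Fintype.card Ω : ℝ) := by
    exact_mod_cast Fintype.card_pos
  have hupos : ∀ x : Ω, (0:ℝ) < unif Ω x := by
    intro x; simp only [unif]; positivity
  have hlog2 : (0:ℝ) < Real.log 2 := Real.log_pos one_lt_two
  have husum : ∑ x : Ω, unif Ω x = 1 := by
    simp only [unif, Finset.sum_const, Finset.card_univ, nsmul_eq_mul]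
    field_simp
  have key : ∀ x : Ω, (μ x - unif Ω x) / Real.log 2 ≤
      (if 0 < μ x then μ x * Real.logb 2 (μ x / unif Ω x) else 0) := by
    intro x
    set u := unif Ω x with hu
    by_cases h : 0 < μ x
    · rw [if_pos h]
      have hupos' : 0 < u := hupos x
      have hrw : μ x * Real.logb 2 (μ x / u) = μ x * Real.log (μ x / u) / Real.log 2 := by
        rw [Real.logb]; ring
      rw [hrw, div_le_div_iff_of_pos_right hlog2]
      have hl : Real.log (u / μ x) ≤ u / μ x - 1 :=
        Real.log_le_sub_one_of_pos (by positivity)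
      have hinv : Real.log (μ x / u) = -Real.log (u / μ x) := by
        rw [show μ x / u = (u / μ x)⁻¹ by rw [inv_div], Real.log_inv]
      have h2 : μ x * (u / μ x) = u := by field_simp
      nlinarith [mul_le_mul_of_nonneg_left hl h.le]
    · rw [if_neg h]
      have hx0 : μ x = 0 := le_antisymm (not_lt.mp h) (h0 x)
      rw [hx0]
      apply div_nonpos_of_nonpos_of_nonneg
      · linarith [hupos x]
      · exact hlog2.le
  rw [KL]
  calc (0:ℝ) = ∑ x : Ω, (μ x - unif Ω x) / Real.log 2 := by
        rw [← Finset.sum_div, Finset.sum_sub_distrib, h1, husum]; simp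
    _ ≤ _ := Finset.sum_le_sum fun x _ => key x

set_option maxHeartbeats 1000000 in
/-- If for every `i ∈ L` the coordinate marginals of `ν^{(i)}` satisfy
`∑_{c∈M} KL(ν^{(i)}_c ‖ 𝒰_Ω) ≤ θ²·|M|`, and `(c_i)` are independent uniform on `M`, then
`Pr(|{i ∈ L : KL(ν^{(i)}_{c_i} ‖ 𝒰_Ω) > θ}| ≥ k/4) ≤ 2^k·θ^{k/4}`. -/
theorem stmt19 (k : ℕ) (hk : 1 ≤ k) (θ : ℝ) (hθ0 : 0 < θ) (hθ1 : θ < 1)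
    (Ω Mt : Type*) [Fintype Ω] [Nonempty Ω] [Fintype Mt] [Nonempty Mt]
    (L : Finset (Fin k))
    (ν : Fin k → (Mt → Ω) → ℝ)
    (hν0 : ∀ i ∈ L, ∀ f, 0 ≤ ν i f) (hν1 : ∀ i ∈ L, ∑ f, ν i f = 1)
    (hKL : ∀ i ∈ L, ∑ c : Mt, KL (marg (ν i) c) (unif Ω) ≤ θ ^ 2 * (Fintype.card Mt : ℝ)) :
    (∑ c : Fin k → Mt,
        if (k : ℝ) / 4 ≤
            ((L.filter (fun i => θ < KL (marg (ν i) (c i)) (unif Ω))).card : ℝ)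
        then (1 : ℝ) else 0)
      / ((Fintype.card Mt : ℝ) ^ k)
      ≤ 2 ^ k * θ ^ ((k : ℝ) / 4) := by
  have hM : (0:ℝ) < (Fintype.card Mt : ℝ) := by exact_mod_cast Fintype.card_pos
  -- marginals are distributions, hence nonneg KL
  have hKLnn : ∀ i ∈ L, ∀ c : Mt, 0 ≤ KL (marg (ν i) c) (unif Ω) := by
    intro i hi c
    apply KL_unif_nonneg
    · intro x
      exact Finset.sum_nonneg fun f _ => by
        split
        · exact hν0 i hi f
        · exact le_refl 0
    · simp only [marg]
      rw [Finset.sum_comm]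
      calc ∑ f : Mt → Ω, ∑ x : Ω, (if f c = x then ν i f else 0)
          = ∑ f : Mt → Ω, ν i f := by
            apply Finset.sum_congr rfl
            intro f _
            simp
        _ = 1 := hν1 i hi
  -- bad coordinate sets
  set B : Fin k → Finset Mt :=
    fun i => Finset.univ.filter (fun c => θ < KL (marg (ν i) c) (unif Ω)) with hBdef
  have hB : ∀ i ∈ L, ((B i).card : ℝ) ≤ θ * (Fintype.card Mt : ℝ) := by
    intro i hi
    have h1 : θ * ((B i).card : ℝ) ≤ ∑ c ∈ B i, KL (marg (ν i) c) (unif Ω) := by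
      rw [mul_comm, ← nsmul_eq_mul, ← Finset.sum_const]
      exact Finset.sum_le_sum fun c hc => (Finset.mem_filter.mp hc).2.le
    have h2 : ∑ c ∈ B i, KL (marg (ν i) c) (unif Ω) ≤
        ∑ c : Mt, KL (marg (ν i) c) (unif Ω) :=
      Finset.sum_le_sum_of_subset_of_nonneg (Finset.subset_univ _)
        (fun c _ _ => hKLnn i hi c)
    have h3 := hKL i hi
    have : θ * ((B i).card : ℝ) ≤ θ * (θ * (Fintype.card Mt : ℝ)) := by
      nlinarith
    exact le_of_mul_le_mul_left this hθ0
  set m : ℕ := ⌈(k : ℝ) / 4⌉₊ with hmdef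
  have hmk : m ≤ k := by
    apply Nat.ceil_le.mpr
    have hk0 : (0:ℝ) ≤ (k:ℝ) := Nat.cast_nonneg k
    linarith
  -- pointwise bound on the indicator
  have hpoint : ∀ c : Fin k → Mt,
      (if (k : ℝ) / 4 ≤
          ((L.filter (fun i => θ < KL (marg (ν i) (c i)) (unif Ω))).card : ℝ)
        then (1 : ℝ) else 0) ≤
      ∑ S ∈ L.powersetCard m, ∏ i ∈ S, (if c i ∈ B i then (1:ℝ) else 0) := by
    intro c
    by_cases h : (k : ℝ) / 4 ≤
        ((L.filter (fun i => θ < KL (marg (ν i) (c i)) (unif Ω))).card : ℝ)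
    · rw [if_pos h]
      set T := L.filter (fun i => θ < KL (marg (ν i) (c i)) (unif Ω)) with hT
      have hmT : m ≤ T.card := Nat.ceil_le.mpr (by exact_mod_cast h)
      obtain ⟨S, hST, hScard⟩ := Finset.exists_subset_card_eq hmT
      have hSL : S ∈ L.powersetCard m :=
        Finset.mem_powersetCard.mpr ⟨hST.trans (Finset.filter_subset _ _), hScard⟩
      have hone : ∏ i ∈ S, (if c i ∈ B i then (1:ℝ) else 0) = 1 := by
        apply Finset.prod_eq_one
        intro i hi
        have : c i ∈ B i := by
          rw [hBdef]
          simp only [Finset.mem_filter, Finset.mem_univ, true_and]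
          exact (Finset.mem_filter.mp (hST hi)).2
        rw [if_pos this]
      calc (1:ℝ) = ∏ i ∈ S, (if c i ∈ B i then (1:ℝ) else 0) := hone.symm
        _ ≤ _ := Finset.single_le_sum
            (f := fun S' => ∏ i ∈ S', (if c i ∈ B i then (1:ℝ) else 0))
            (fun S' _ => Finset.prod_nonneg fun i _ => by split <;> norm_num) hSL
    · rw [if_neg h]
      exact Finset.sum_nonneg fun S _ =>
        Finset.prod_nonneg fun i _ => by split <;> norm_num
  -- sum over c of each product, via product structure
  have hfactor : ∀ S ∈ L.powersetCard m,
      (∑ c : Fin k → Mt, ∏ i ∈ S, (if c i ∈ B i then (1:ℝ) else 0)) ≤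
        θ ^ m * (Fintype.card Mt : ℝ) ^ k := by
    intro S hS
    obtain ⟨hSL, hScard⟩ := Finset.mem_powersetCard.mp hS
    calc (∑ c : Fin k → Mt, ∏ i ∈ S, (if c i ∈ B i then (1:ℝ) else 0))
        = ∑ c : Fin k → Mt, ∏ i : Fin k,
            (if i ∈ S then (if c i ∈ B i then (1:ℝ) else 0) else 1) :=
          Finset.sum_congr rfl fun c _ => (Fintype.prod_ite_mem S _).symm
      _ = ∏ i : Fin k, ∑ x : Mt,
            (if i ∈ S then (if x ∈ B i then (1:ℝ) else 0) else 1) :=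
          (Fintype.prod_sum
            (fun i x => if i ∈ S then (if x ∈ B i then (1:ℝ) else 0) else 1)).symm
      _ ≤ ∏ i : Fin k,
            (if i ∈ S then θ * (Fintype.card Mt : ℝ) else (Fintype.card Mt : ℝ)) := by
          apply Finset.prod_le_prod
          · intro i _
            exact Finset.sum_nonneg fun x _ => by split_ifs <;> norm_num
          · intro i _
            by_cases hiS : i ∈ S
            · simp only [if_pos hiS]
              have hcB : ∑ x : Mt, (if x ∈ B i then (1:ℝ) else 0) = ((B i).card : ℝ) := by
                rw [Finset.sum_ite_mem, Finset.univ_inter, Finset.sum_const, nsmul_eq_mul,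
                  mul_one]
              rw [hcB]
              exact hB i (hSL hiS)
            · simp only [if_neg hiS, Finset.sum_const, Finset.card_univ, nsmul_eq_mul,
                mul_one]
              exact le_refl _
      _ = (θ * (Fintype.card Mt : ℝ)) ^ m * (Fintype.card Mt : ℝ) ^ (k - m) := by
          rw [Finset.prod_ite, Finset.prod_const, Finset.prod_const]
          have hcS : (Finset.univ.filter (fun i => i ∈ S)).card = m := by
            rw [Finset.filter_mem_eq_inter, Finset.univ_inter, hScard]
          have hcS' : (Finset.univ.filter (fun i => ¬ i ∈ S)).card = k - m := by
            have := Finset.card_filter_add_card_filter_not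
              (s := (Finset.univ : Finset (Fin k))) (p := fun i => i ∈ S)
            rw [Finset.card_univ, Fintype.card_fin] at this
            omega
          rw [hcS, hcS']
      _ = θ ^ m * (Fintype.card Mt : ℝ) ^ k := by
          rw [mul_pow, mul_assoc, ← pow_add]
          congr 2
          omega
  -- put everything together
  have hcount : (∑ c : Fin k → Mt,
      if (k : ℝ) / 4 ≤
          ((L.filter (fun i => θ < KL (marg (ν i) (c i)) (unif Ω))).card : ℝ)
      then (1 : ℝ) else 0)
      ≤ ((L.powersetCard m).card : ℝ) * (θ ^ m * (Fintype.card Mt : ℝ) ^ k) := by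
    calc _ ≤ ∑ c : Fin k → Mt, ∑ S ∈ L.powersetCard m,
            ∏ i ∈ S, (if c i ∈ B i then (1:ℝ) else 0) :=
          Finset.sum_le_sum fun c _ => hpoint c
      _ = ∑ S ∈ L.powersetCard m, ∑ c : Fin k → Mt,
            ∏ i ∈ S, (if c i ∈ B i then (1:ℝ) else 0) := Finset.sum_comm
      _ ≤ ∑ _S ∈ L.powersetCard m, θ ^ m * (Fintype.card Mt : ℝ) ^ k :=
          Finset.sum_le_sum hfactor
      _ = ((L.powersetCard m).card : ℝ) * (θ ^ m * (Fintype.card Mt : ℝ) ^ k) := by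
          rw [Finset.sum_const, nsmul_eq_mul]
  have hchoose : ((L.powersetCard m).card : ℝ) ≤ 2 ^ k := by
    rw [Finset.card_powersetCard]
    have h1 : L.card.choose m ≤ k.choose m := by
      apply Nat.choose_le_choose
      calc L.card ≤ Fintype.card (Fin k) := Finset.card_le_univ L
        _ = k := Fintype.card_fin k
    have h2 : k.choose m ≤ 2 ^ k := by
      calc k.choose m ≤ ∑ i ∈ Finset.range (k+1), k.choose i :=
            Finset.single_le_sum (fun i _ => Nat.zero_le _)
              (Finset.mem_range.mpr (by omega))
        _ = 2 ^ k := Nat.sum_range_choose k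
    exact_mod_cast h1.trans h2
  have hθm : θ ^ m ≤ θ ^ ((k:ℝ)/4) := by
    rw [← Real.rpow_natCast θ m]
    exact Real.rpow_le_rpow_of_exponent_ge hθ0 hθ1.le (Nat.le_ceil _)
  have hθkr : (0:ℝ) < θ ^ ((k:ℝ)/4) := Real.rpow_pos_of_pos hθ0 _
  rw [div_le_iff₀ (by positivity)]
  calc (∑ c : Fin k → Mt,
      if (k : ℝ) / 4 ≤
          ((L.filter (fun i => θ < KL (marg (ν i) (c i)) (unif Ω))).card : ℝ)
      then (1 : ℝ) else 0)
      ≤ ((L.powersetCard m).card : ℝ) * (θ ^ m * (Fintype.card Mt : ℝ) ^ k) := hcount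
    _ ≤ (2 ^ k) * (θ ^ ((k:ℝ)/4) * (Fintype.card Mt : ℝ) ^ k) := by
        apply mul_le_mul hchoose
        · exact mul_le_mul_of_nonneg_right hθm (by positivity)
        · positivity
        · positivity
    _ = 2 ^ k * θ ^ ((k : ℝ) / 4) * (Fintype.card Mt : ℝ) ^ k := by ring
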